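/- For every real number α and every natural number N ≥ 1, summing over all set partitions P of {0, …, N−1}: ∑_P α^{|P|} · ∏_{B ∈ P} (|B| − 1)! = ∏_{t=0}^{N−1} (α + t), where |P| is the number of blocks of P and |B| is the cardinality of block B. -/

import Mathlib

open Finset

/-- A `Finpartition` is determined by its parts, so over a fintype there are
finitely many finpartitions. -/
noncomputable instance {α : Type*} [Lattice α] [OrderBot α] [Fintype α] [DecidableEq α]
    (a : α) : Fintype (Finpartition a) :=
  Fintype.ofInjective Finpartition.parts fun P Q h => by
    cases P; cases Q; simpa using h

namespace DirichletEPPF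

variable {ι : Type*} [DecidableEq ι]

/-- Insert a new element `a` into the block `B` of a partition of `t`. -/
def addToBlock {t : Finset ι} {a : ι} (ha : a ∉ t) (P : Finpartition t) {B : Finset ι}
    (hB : B ∈ P.parts) : Finpartition (insert a t) where
  parts := insert (insert a B) (P.parts.erase B)
  supIndep := by
    rw [Finset.supIndep_iff_pairwiseDisjoint, coe_insert]
    refine (P.disjoint.subset (by exact_mod_cast coe_subset.2 (erase_subset B P.parts))).insert
      fun C hC hne => ?_
    have hC' : C ∈ P.parts.erase B := by exact_mod_cast hC
    have h1 : Disjoint B C := P.disjoint hB (mem_of_mem_erase hC') (ne_of_mem_erase hC').symm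
    have h2 : a ∉ C := fun h => ha (P.le (mem_of_mem_erase hC') h)
    simpa [Finset.disjoint_insert_left] using And.intro h2 h1
  sup_parts := by
    rw [sup_insert, id_eq, Finset.sup_eq_union, insert_union, ← Finset.sup_eq_union]
    congr 1
    conv_rhs => rw [← P.sup_parts, ← insert_erase hB]
    rw [sup_insert, id_eq]
  bot_notMem := by
    intro h
    rcases mem_insert.1 h with h | h
    · exact (insert_nonempty a B).ne_empty h.symm
    · exact P.bot_notMem (mem_of_mem_erase h)

theorem addToBlock_parts {t : Finset ι} {a : ι} (ha : a ∉ t) (P : Finpartition t) {B : Finset ι}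
    (hB : B ∈ P.parts) :
    (addToBlock ha P hB).parts = insert (insert a B) (P.parts.erase B) := rfl

/-- Extend a partition of `t` by the new singleton block `{a}`. -/
def addSingleton {t : Finset ι} {a : ι} (ha : a ∉ t) (P : Finpartition t) :
    Finpartition (insert a t) :=
  P.extend (b := {a}) (by simp) (Finset.disjoint_singleton_right.2 ha)
    (by rw [Finset.sup_eq_union, Finset.union_comm]; exact rfl)

theorem addSingleton_parts {t : Finset ι} {a : ι} (ha : a ∉ t) (P : Finpartition t) :
    (addSingleton ha P).parts = insert {a} P.parts := rfl

theorem singleton_not_mem {t : Finset ι} {a : ι} (ha : a ∉ t) (P : Finpartition t) :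
    {a} ∉ P.parts := fun h => ha (P.le h (mem_singleton_self a))

theorem not_mem_of_mem_a {t : Finset ι} {a : ι} (ha : a ∉ t) (P : Finpartition t)
    {C : Finset ι} (haC : a ∈ C) : C ∉ P.parts := fun h => ha (P.le h haC)

end DirichletEPPF

namespace DirichletEPPF

variable {ι : Type*} [DecidableEq ι]

/-- The forward map: a partition of `t` together with a choice of "where `a` goes". -/
noncomputable def F {t : Finset ι} {a : ι} (ha : a ∉ t) :
    (Σ P : Finpartition t, Option {B // B ∈ P.parts}) → Finpartition (insert a t)
  | ⟨P, none⟩ => addSingleton ha P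
  | ⟨P, some B⟩ => addToBlock ha P B.2

theorem F_injective {t : Finset ι} {a : ι} (ha : a ∉ t) : Function.Injective (F ha) := by
  rintro ⟨P, o⟩ ⟨P', o'⟩ h
  have hp : (F ha ⟨P, o⟩).parts = (F ha ⟨P', o'⟩).parts := congrArg Finpartition.parts h
  -- helper: a `some` image never has `{a}` as a part
  have key : ∀ (R : Finpartition t) (B : {B // B ∈ R.parts}),
      ({a} : Finset ι) ∉ (F ha ⟨R, some B⟩).parts := by
    rintro R ⟨B, hB⟩ hmem
    rcases mem_insert.1 hmem with h2 | h2
    · obtain ⟨x, hx⟩ := nonempty_iff_ne_empty.2 (R.ne_bot hB)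
      have hxa : x ∈ ({a} : Finset ι) := by rw [h2]; exact mem_insert_of_mem hx
      have : a ∈ B := (mem_singleton.1 hxa) ▸ hx
      exact ha (R.le hB this)
    · exact singleton_not_mem ha R (mem_of_mem_erase h2)
  match o, o' with
  | none, none =>
    have hpp : P.parts = P'.parts := by
      have h2 := congrArg (fun S => S.erase ({a} : Finset ι)) hp
      simpa [addSingleton_parts, F, erase_insert (singleton_not_mem ha P),
        erase_insert (singleton_not_mem ha P')] using h2
    have : P = P' := Finpartition.ext hpp
    subst this; rfl
  | none, some B' =>
    exact absurd (hp ▸ mem_insert_self ({a} : Finset ι) P.parts) (key P' B')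
  | some B, none =>
    have hmem : ({a} : Finset ι) ∈ (F ha ⟨P, some B⟩).parts := by
      rw [hp]; exact mem_insert_self _ _
    exact absurd hmem (key P B)
  | some ⟨B, hB⟩, some ⟨B', hB'⟩ =>
    have haB : a ∉ B := fun hh => ha (P.le hB hh)
    have haB' : a ∉ B' := fun hh => ha (P'.le hB' hh)
    have m1 : insert a B ∈ (F ha ⟨P, some ⟨B, hB⟩⟩).parts := mem_insert_self _ _
    have m2 : insert a B' ∈ (F ha ⟨P, some ⟨B, hB⟩⟩).parts := by
      rw [h]; exact mem_insert_self _ _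
    have heq : insert a B = insert a B' :=
      ((F ha ⟨P, some ⟨B, hB⟩⟩).existsUnique_mem (mem_insert_self a t)).unique
        ⟨m1, mem_insert_self a B⟩ ⟨m2, mem_insert_self a B'⟩
    have hBB' : B = B' := by
      have := congrArg (fun S => S.erase a) heq
      simpa [erase_insert haB, erase_insert haB'] using this
    subst hBB'
    have hnew : insert a B ∉ P.parts.erase B :=
      fun hh => ha (P.le (mem_of_mem_erase hh) (mem_insert_self a B))
    have hnew' : insert a B ∉ P'.parts.erase B :=
      fun hh => ha (P'.le (mem_of_mem_erase hh) (mem_insert_self a B))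
    have herase : P.parts.erase B = P'.parts.erase B := by
      have h2 := congrArg (fun S => S.erase (insert a B)) hp
      simpa [F, addToBlock_parts, erase_insert hnew, erase_insert hnew'] using h2
    have hpp : P.parts = P'.parts := by
      rw [← insert_erase hB, herase, insert_erase hB']
    have : P = P' := Finpartition.ext hpp
    subst this; rfl

theorem F_surjective {t : Finset ι} {a : ι} (ha : a ∉ t) : Function.Surjective (F ha) := by
  intro Q
  have haQ : a ∈ insert a t := mem_insert_self a t
  set T := Q.part a with hTdef
  have hT : T ∈ Q.parts := Q.part_mem.2 haQ
  have haT : a ∈ T := Q.mem_part haQ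
  -- no other part contains a
  have huniq : ∀ C ∈ Q.parts, a ∈ C → C = T :=
    fun C hC haC => (Q.existsUnique_mem haQ).unique ⟨hC, haC⟩ ⟨hT, haT⟩
  by_cases hTa : T = {a}
  · -- a is a singleton block
    have hTmem : ({a} : Finset ι) ∈ Q.parts := hTa ▸ hT
    have haE : a ∉ (Q.parts.erase ({a} : Finset ι)).sup id := by
      intro hh
      obtain ⟨C, hC, haC⟩ := Finset.mem_sup.1 hh
      exact (ne_of_mem_erase hC) ((huniq C (mem_of_mem_erase hC) haC).trans hTa)
    have hsup : (Q.parts.erase ({a} : Finset ι)).sup id = t := by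
      have h1 : insert a ((Q.parts.erase ({a} : Finset ι)).sup id) = insert a t := by
        conv_rhs => rw [← Q.sup_parts]
        conv_rhs => rw [← insert_erase hTmem]
        rw [sup_insert, id_eq, Finset.sup_eq_union]
        exact rfl
      have h2 := congrArg (fun S => S.erase a) h1
      simpa [erase_insert haE, erase_insert ha] using h2
    refine ⟨⟨Q.ofSubset (erase_subset _ _) hsup, none⟩, ?_⟩
    apply Finpartition.ext
    show insert ({a} : Finset ι) (Q.parts.erase ({a} : Finset ι)) = Q.parts
    exact insert_erase hTmem
  · -- a lives in a bigger block T; B := T.erase a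
    have haB : a ∉ T.erase a := notMem_erase _ _
    have hBne : (T.erase a).Nonempty := by
      rw [nonempty_iff_ne_empty]
      intro hh
      have hTs : T = insert a (T.erase a) := (insert_erase haT).symm
      rw [hh] at hTs
      exact hTa (by simpa using hTs)
    have haE : a ∉ (Q.parts.erase T).sup id := by
      intro hh
      obtain ⟨C, hC, haC⟩ := Finset.mem_sup.1 hh
      exact (ne_of_mem_erase hC) (huniq C (mem_of_mem_erase hC) haC)
    refine ⟨⟨⟨insert (T.erase a) (Q.parts.erase T), ?_, ?_, ?_⟩,
      some ⟨T.erase a, mem_insert_self _ _⟩⟩, ?_⟩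
    · -- supIndep
      rw [Finset.supIndep_iff_pairwiseDisjoint, coe_insert]
      refine (Q.disjoint.subset (by exact_mod_cast coe_subset.2 (erase_subset T Q.parts))).insert
        fun C hC hne => ?_
      have hC' : C ∈ Q.parts.erase T := by exact_mod_cast hC
      have h1 : Disjoint T C := Q.disjoint hT (mem_of_mem_erase hC') (ne_of_mem_erase hC').symm
      exact h1.mono_left (erase_subset a T)
    · -- sup_parts
      rw [sup_insert, id_eq, Finset.sup_eq_union]
      have haE2 : a ∉ T.erase a ∪ (Q.parts.erase T).sup id := by
        rw [mem_union]
        rintro (h | h)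
        exacts [haB h, haE h]
      have h1 : insert a (T.erase a ∪ (Q.parts.erase T).sup id) = insert a t := by
        rw [← insert_union, insert_erase haT, ← Finset.sup_eq_union]
        conv_rhs => rw [← Q.sup_parts]
        conv_rhs => rw [← insert_erase hT]
        rw [sup_insert, id_eq]
      have h2 := congrArg (fun S => S.erase a) h1
      simpa [erase_insert haE2, erase_insert ha] using h2
    · -- not_bot_mem
      intro hh
      rw [bot_eq_empty] at hh
      rcases mem_insert.1 hh with h2 | h2
      · exact hBne.ne_empty h2.symm
      · exact Q.bot_notMem (by rw [bot_eq_empty]; exact mem_of_mem_erase h2)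
    · -- F of this equals Q
      apply Finpartition.ext
      have hBnotin : T.erase a ∉ Q.parts.erase T := by
        intro hh
        have hdisj := Q.disjoint (mem_of_mem_erase hh) hT (ne_of_mem_erase hh)
        obtain ⟨x, hx⟩ := hBne
        exact Finset.disjoint_left.1 hdisj hx (mem_of_mem_erase hx)
      show insert (insert a (T.erase a))
          ((insert (T.erase a) (Q.parts.erase T)).erase (T.erase a)) = Q.parts
      rw [erase_insert hBnotin, insert_erase haT, insert_erase hT]

end DirichletEPPF

namespace DirichletEPPF

variable {ι : Type*} [DecidableEq ι]

/-- The EPPF weight of a partition. -/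
noncomputable def w (α : ℝ) {s : Finset ι} (P : Finpartition s) : ℝ :=
  α ^ P.parts.card * ∏ B ∈ P.parts, (Nat.factorial (B.card - 1) : ℝ)

theorem w_addSingleton (α : ℝ) {t : Finset ι} {a : ι} (ha : a ∉ t) (P : Finpartition t) :
    w α (addSingleton ha P) = α * w α P := by
  have h := singleton_not_mem ha P
  rw [w, w, addSingleton_parts, card_insert_of_notMem h, prod_insert h]
  simp [pow_succ]
  ring

theorem w_addToBlock (α : ℝ) {t : Finset ι} {a : ι} (ha : a ∉ t) (P : Finpartition t)
    {B : Finset ι} (hB : B ∈ P.parts) :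
    w α (addToBlock ha P hB) = B.card * w α P := by
  have haB : a ∉ B := fun hh => ha (P.le hB hh)
  have hnew : insert a B ∉ P.parts.erase B :=
    fun hh => ha (P.le (mem_of_mem_erase hh) (mem_insert_self a B))
  have hBne : B.Nonempty := nonempty_iff_ne_empty.2 (P.ne_bot hB)
  obtain ⟨n, hn⟩ : ∃ n, B.card = n + 1 :=
    ⟨B.card - 1, (Nat.succ_pred_eq_of_pos (card_pos.2 hBne)).symm⟩
  have hcard : P.parts.card = (P.parts.erase B).card + 1 := by
    rw [card_erase_of_mem hB, Nat.sub_add_cancel (card_pos.2 ⟨B, hB⟩)]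
  have hprod : ∏ C ∈ P.parts, (Nat.factorial (C.card - 1) : ℝ)
      = (Nat.factorial (B.card - 1) : ℝ) *
        ∏ C ∈ P.parts.erase B, (Nat.factorial (C.card - 1) : ℝ) := by
    conv_lhs => rw [← insert_erase hB]
    rw [prod_insert (notMem_erase _ _)]
  rw [w, w, addToBlock_parts, card_insert_of_notMem hnew, prod_insert hnew,
    card_insert_of_notMem haB, hcard, hprod, hn]
  simp only [Nat.add_sub_cancel, Nat.factorial_succ]
  push_cast
  ring

theorem sum_w [Fintype ι] (α : ℝ) (s : Finset ι) :
    ∑ P : Finpartition s, w α P = ∏ k ∈ range s.card, (α + k) := by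
  induction s using Finset.induction_on with
  | empty =>
    haveI : Unique (Finpartition (∅ : Finset ι)) :=
      inferInstanceAs (Unique (Finpartition (⊥ : Finset ι)))
    rw [card_empty, range_zero, prod_empty]
    have h1 : ∀ P : Finpartition (∅ : Finset ι), w α P = 1 := by
      intro P
      have hp : P.parts = ∅ := Finpartition.parts_eq_empty_iff.2 rfl
      rw [w, hp]
      simp
    calc ∑ P : Finpartition (∅ : Finset ι), w α P
        = ∑ P : Finpartition (∅ : Finset ι), 1 := by
          exact Finset.sum_congr rfl fun P _ => h1 P
      _ = 1 := by
          rw [Finset.sum_const, Finset.card_univ, Fintype.card_unique]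
          simp
  | @insert a t ha ih =>
    have hbij : Function.Bijective (F ha) := ⟨F_injective ha, F_surjective ha⟩
    have h0 : ∑ Q : Finpartition (insert a t), w α Q
        = ∑ x : Σ P : Finpartition t, Option {B // B ∈ P.parts}, w α (F ha x) :=
      (Fintype.sum_bijective (F ha) hbij _ _ fun x => rfl).symm
    rw [h0, ← Finset.univ_sigma_univ, Finset.sum_sigma]
    have h1 : ∀ P : Finpartition t,
        ∑ o : Option {B // B ∈ P.parts}, w α (F ha ⟨P, o⟩) = (α + t.card) * w α P := by
      intro P
      rw [Fintype.sum_option]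
      have h2 : ∑ b : {B // B ∈ P.parts}, w α (F ha ⟨P, some b⟩)
          = ∑ b : {B // B ∈ P.parts}, ((b : Finset ι).card : ℝ) * w α P := by
        refine Finset.sum_congr rfl fun b _ => ?_
        exact w_addToBlock α ha P b.2
      rw [h2, show F ha ⟨P, none⟩ = addSingleton ha P from rfl, w_addSingleton α ha P]
      rw [Finset.sum_coe_sort P.parts (fun B => (B.card : ℝ) * w α P)]
      rw [← Finset.sum_mul, ← Nat.cast_sum]
      rw [P.sum_card_parts]
      ring
    calc ∑ P : Finpartition t, ∑ o : Option {B // B ∈ P.parts}, w α (F ha ⟨P, o⟩)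
        = ∑ P : Finpartition t, (α + t.card) * w α P :=
          Finset.sum_congr rfl fun P _ => h1 P
      _ = (α + t.card) * ∑ P : Finpartition t, w α P := by rw [Finset.mul_sum]
      _ = ∏ k ∈ range (insert a t).card, (α + k) := by
          rw [ih, card_insert_of_notMem ha, prod_range_succ]
          ring

end DirichletEPPF

/-- The Dirichlet-process EPPF sums to one: summing over all set partitions `P`
of `{0,…,N-1}`, `∑_P α^{|P|} ∏_{B ∈ P} (|B|-1)! = ∏_{t=0}^{N-1} (α + t)`. -/
theorem dirichlet_eppf_sums_to_one (α : ℝ) (N : ℕ) (hN : 1 ≤ N) :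
    ∑ P : Finpartition (univ : Finset (Fin N)),
        α ^ P.parts.card * ∏ B ∈ P.parts, (Nat.factorial (B.card - 1) : ℝ) =
      ∏ t ∈ range N, (α + t) := by
  have h := DirichletEPPF.sum_w α (univ : Finset (Fin N))
  simpa [DirichletEPPF.w, card_univ] using h
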